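/- Let f be an L(1,2)-edge labeling of T8, let S be a unit square, and let c ≥ 1. Suppose e, e', e'' ∈ G_S are the three edges of a triangle of T8, with e non-slanting, f(e) = c, f(e') = c − 1 and f(e'') = c + 1. Then there exist two distinct unit squares S1, S2, each with all vertices in S', such that no edge in G_{S1} and no edge in G_{S2} has label c under f. -/

import Mathlib

/-- The infinite octagonal grid (king graph on `ℤ × ℤ`): distinct vertices are
adjacent iff their Chebyshev distance is `1`. -/
def T8 : SimpleGraph (ℤ × ℤ) where
  Adj u v := u ≠ v ∧ max |u.1 - v.1| |u.2 - v.2| = 1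
  symm := by
    constructor
    rintro u v ⟨h1, h2⟩
    refine ⟨h1.symm, ?_⟩
    rw [abs_sub_comm v.1 u.1, abs_sub_comm v.2 u.2]
    exact h2
  loopless := by constructor; rintro u ⟨h, -⟩; exact h rfl

/-- Two (unordered pairs regarded as) edges share an endpoint. -/
def SharesEndpoint (e1 e2 : Sym2 (ℤ × ℤ)) : Prop := ∃ v, v ∈ e1 ∧ v ∈ e2

/-- Two edges of `T8` are at distance `1`: distinct and sharing an endpoint. -/
def EdgeDist1 (e1 e2 : Sym2 (ℤ × ℤ)) : Prop := e1 ≠ e2 ∧ SharesEndpoint e1 e2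

/-- Two edges of `T8` are at distance `2`: distinct, sharing no endpoint, but some
edge of `T8` shares an endpoint with both. -/
def EdgeDist2 (e1 e2 : Sym2 (ℤ × ℤ)) : Prop :=
  e1 ≠ e2 ∧ ¬ SharesEndpoint e1 e2 ∧
    ∃ e3 ∈ T8.edgeSet, SharesEndpoint e1 e3 ∧ SharesEndpoint e3 e2

/-- `f` is an `L(1,2)`-edge labeling of `T8`: edges at distance `1` get distinct
labels and edges at distance `2` get labels differing by at least `2`. -/
def IsL12 (f : Sym2 (ℤ × ℤ) → ℕ) : Prop :=
  (∀ e1 ∈ T8.edgeSet, ∀ e2 ∈ T8.edgeSet, EdgeDist1 e1 e2 → f e1 ≠ f e2) ∧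
  (∀ e1 ∈ T8.edgeSet, ∀ e2 ∈ T8.edgeSet, EdgeDist2 e1 e2 → 2 ≤ |(f e1 : ℤ) - (f e2 : ℤ)|)

/-- An `L(1,2)`-edge labeling of `T8` with labels in `{0, …, n}`. -/
def IsL12Bounded (n : ℕ) (f : Sym2 (ℤ × ℤ) → ℕ) : Prop :=
  IsL12 f ∧ ∀ e ∈ T8.edgeSet, f e ≤ n

/-- The unit square `S(a,b)`. -/
def unitSquare (a b : ℤ) : Set (ℤ × ℤ) :=
  {(a, b), (a + 1, b), (a, b + 1), (a + 1, b + 1)}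

/-- `GS S`: the set of edges of `T8` incident to at least one vertex of `S`. -/
def GS (S : Set (ℤ × ℤ)) : Set (Sym2 (ℤ × ℤ)) :=
  {e | e ∈ T8.edgeSet ∧ ∃ v ∈ S, v ∈ e}

/-- `Sprime a b`: vertices at Chebyshev distance at most `2` from some vertex of
`S(a,b)` (that is, `S ∪ N(S) ∪ N(N(S))`). -/
def Sprime (a b : ℤ) : Set (ℤ × ℤ) :=
  {u | ∃ v ∈ unitSquare a b, max |u.1 - v.1| |u.2 - v.2| ≤ 2}

/-- Two edges sharing an endpoint `v`, written `e1 = {v, v+d1}` and `e2 = {v, v+d2}`,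
are at angle `45°` if exactly one of `d1, d2` has both coordinates nonzero and
`d1 · d2 = 1`. -/
def Angle45 (e1 e2 : Sym2 (ℤ × ℤ)) : Prop :=
  ∃ v d1 d2 : ℤ × ℤ, e1 = s(v, v + d1) ∧ e2 = s(v, v + d2) ∧
    Xor' (d1.1 ≠ 0 ∧ d1.2 ≠ 0) (d2.1 ≠ 0 ∧ d2.2 ≠ 0) ∧
    d1.1 * d2.1 + d1.2 * d2.2 = 1

/-- An edge is slanting if its endpoints differ in both coordinates. -/
def Slanting (e : Sym2 (ℤ × ℤ)) : Prop :=
  ∃ u v : ℤ × ℤ, e = s(u, v) ∧ u.1 ≠ v.1 ∧ u.2 ≠ v.2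

/-- `e, e', e''` form the edge set of a triangle of `T8`. -/
def TriangleEdgeSet (e e' e'' : Sym2 (ℤ × ℤ)) : Prop :=
  ∃ u v w : ℤ × ℤ, T8.Adj u v ∧ T8.Adj v w ∧ T8.Adj u w ∧
    ({e, e', e''} : Set (Sym2 (ℤ × ℤ))) = {s(u, v), s(v, w), s(u, w)}

/-- A triangle of `T8`: three pairwise adjacent vertices. -/
def IsTriangle (t : Finset (ℤ × ℤ)) : Prop :=
  t.card = 3 ∧ ∀ u ∈ t, ∀ v ∈ t, u ≠ v → T8.Adj u v

/-- The edges of a triangle. -/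
def triangleEdges (t : Finset (ℤ × ℤ)) : Set (Sym2 (ℤ × ℤ)) :=
  {e | ∃ u ∈ t, ∃ v ∈ t, u ≠ v ∧ e = s(u, v)}


lemma T8_adj_mk {u v : ℤ × ℤ} (hne : u.1 ≠ v.1 ∨ u.2 ≠ v.2)
    (h1 : -1 ≤ u.1 - v.1) (h2 : u.1 - v.1 ≤ 1) (h3 : -1 ≤ u.2 - v.2) (h4 : u.2 - v.2 ≤ 1) :
    T8.Adj u v := by
  constructor
  · rw [Ne, Prod.ext_iff]
    rintro ⟨ha, hb⟩
    rcases hne with h | h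
    · exact h ha
    · exact h hb
  · have ha : |u.1 - v.1| ≤ 1 := abs_le.mpr ⟨h1, h2⟩
    have hb : |u.2 - v.2| ≤ 1 := abs_le.mpr ⟨h3, h4⟩
    refine le_antisymm (max_le ha hb) ?_
    rcases hne with h | h
    · exact le_max_of_le_left (Int.one_le_abs (sub_ne_zero.mpr h))
    · exact le_max_of_le_right (Int.one_le_abs (sub_ne_zero.mpr h))

lemma T8_adj_coords {u v : ℤ × ℤ} (h : T8.Adj u v) :
    (u.1 ≠ v.1 ∨ u.2 ≠ v.2) ∧ -1 ≤ u.1 - v.1 ∧ u.1 - v.1 ≤ 1 ∧ -1 ≤ u.2 - v.2 ∧ u.2 - v.2 ≤ 1 := by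
  obtain ⟨hne, hmax⟩ := h
  have ha : |u.1 - v.1| ≤ 1 := (le_max_left _ _).trans_eq hmax
  have hb : |u.2 - v.2| ≤ 1 := (le_max_right _ _).trans_eq hmax
  rw [abs_le] at ha hb
  refine ⟨?_, ha.1, ha.2, hb.1, hb.2⟩
  rw [Ne, Prod.ext_iff] at hne
  by_contra hcon
  push_neg at hcon
  exact hne ⟨hcon.1, hcon.2⟩

/-- `z` is within Chebyshev distance 1 of `w`. -/
def NearV (z w : ℤ × ℤ) : Prop :=
  -1 ≤ z.1 - w.1 ∧ z.1 - w.1 ≤ 1 ∧ -1 ≤ z.2 - w.2 ∧ z.2 - w.2 ≤ 1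

lemma nearV_of_adj {u v : ℤ × ℤ} (h : T8.Adj u v) : NearV u v := by
  obtain ⟨-, h1, h2, h3, h4⟩ := T8_adj_coords h
  exact ⟨h1, h2, h3, h4⟩

lemma nearV_refl (u : ℤ × ℤ) : NearV u u := by unfold NearV; omega

lemma T8_adj_of_nearV {u v : ℤ × ℤ} (h : NearV u v) (hne : u ≠ v) : T8.Adj u v := by
  obtain ⟨h1, h2, h3, h4⟩ := h
  refine T8_adj_mk ?_ h1 h2 h3 h4
  rw [Ne, Prod.ext_iff] at hne
  by_contra hcon
  push_neg at hcon
  exact hne ⟨hcon.1, hcon.2⟩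

/-- Core lemma: no edge incident to a unit square sitting inside `N[r]` and
avoiding `p, q` can have label `c`. -/
lemma helper_no_c (f : Sym2 (ℤ × ℤ) → ℕ) (hf : IsL12 f) (c : ℕ) (hc : 1 ≤ c)
    (p q r : ℤ × ℤ) (e e' : Sym2 (ℤ × ℤ))
    (heeq : e = s(p, q))
    (hpq : T8.Adj p q) (hpr : T8.Adj p r) (hqr : T8.Adj q r)
    (he'mem : ∀ z ∈ e', z = p ∨ z = q ∨ z = r)
    (hre' : r ∈ e')
    (he'E : e' ∈ T8.edgeSet)
    (hfe : f e = c) (hfe' : f e' = c - 1)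
    (s1 : ℤ × ℤ)
    (hS : ∀ v ∈ unitSquare s1.1 s1.2, NearV v r ∧ v ≠ p ∧ v ≠ q) :
    ∀ e1 ∈ GS (unitSquare s1.1 s1.2), f e1 ≠ c := by
  subst heeq
  have heE : s(p, q) ∈ T8.edgeSet := T8.mem_edgeSet.mpr hpq
  intro e1 he1
  induction e1 using Sym2.ind with
  | _ α β =>
  obtain ⟨he1E, v0, hv0S, hv0e1⟩ := he1
  obtain ⟨hb0, hvp, hvq⟩ := hS v0 hv0S
  rw [Sym2.mem_iff] at hv0e1
  -- e1 ≠ e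
  have hne1 : s(α, β) ≠ s(p, q) := by
    intro h
    rw [Sym2.eq_iff] at h
    rcases hv0e1 with rfl | rfl <;> rcases h with ⟨h1, h2⟩ | ⟨h1, h2⟩
    · exact hvp h1
    · exact hvq h1
    · exact hvq h2
    · exact hvp h2
  by_cases hR : NearV α p ∨ NearV α q ∨ NearV β p ∨ NearV β q
  · -- near e : distance 1 or 2 from e
    have key : ∀ z w : ℤ × ℤ, (z = α ∨ z = β) → (w = p ∨ w = q) → NearV z w →
        f s(α, β) ≠ c := by
      intro z w hz hw hnear
      by_cases hsh : p = α ∨ p = β ∨ q = α ∨ q = β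
      · -- distance 1
        have hd1 : EdgeDist1 s(α, β) s(p, q) := by
          refine ⟨hne1, ?_⟩
          rcases hsh with h | h | h | h
          · exact ⟨p, by rw [Sym2.mem_iff]; left; exact h, by rw [Sym2.mem_iff]; left; rfl⟩
          · exact ⟨p, by rw [Sym2.mem_iff]; right; exact h, by rw [Sym2.mem_iff]; left; rfl⟩
          · exact ⟨q, by rw [Sym2.mem_iff]; left; exact h, by rw [Sym2.mem_iff]; right; rfl⟩
          · exact ⟨q, by rw [Sym2.mem_iff]; right; exact h, by rw [Sym2.mem_iff]; right; rfl⟩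
        have := hf.1 _ he1E _ heE hd1
        rw [hfe] at this
        exact this
      · -- distance 2 via connecting edge s(z, w)
        push_neg at hsh
        have hzw : z ≠ w := by
          rcases hz with rfl | rfl <;> rcases hw with rfl | rfl
          · exact fun h => hsh.1 h.symm
          · exact fun h => hsh.2.2.1 h.symm
          · exact fun h => hsh.2.1 h.symm
          · exact fun h => hsh.2.2.2 h.symm
        have hadj : T8.Adj z w := T8_adj_of_nearV hnear hzw
        have hd2 : EdgeDist2 s(α, β) s(p, q) := by
          refine ⟨hne1, ?_, s(z, w), T8.mem_edgeSet.mpr hadj, ?_, ?_⟩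
          · rintro ⟨x, hx1, hx2⟩
            rw [Sym2.mem_iff] at hx1 hx2
            rcases hx2 with rfl | rfl <;> rcases hx1 with rfl | rfl
            · exact hsh.1 rfl
            · exact hsh.2.1 rfl
            · exact hsh.2.2.1 rfl
            · exact hsh.2.2.2 rfl
          · exact ⟨z, by rw [Sym2.mem_iff]; exact hz, by rw [Sym2.mem_iff]; left; rfl⟩
          · refine ⟨w, by rw [Sym2.mem_iff]; right; rfl, by rw [Sym2.mem_iff]; exact hw⟩
        have := hf.2 _ he1E _ heE hd2
        rw [hfe] at this
        intro hcon
        rw [hcon] at this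
        simp at this
    rcases hR with h | h | h | h
    · exact key α p (Or.inl rfl) (Or.inl rfl) h
    · exact key α q (Or.inl rfl) (Or.inr rfl) h
    · exact key β p (Or.inr rfl) (Or.inl rfl) h
    · exact key β q (Or.inr rfl) (Or.inr rfl) h
  · -- far from e: distance 2 from e'
    push_neg at hR
    obtain ⟨hRa1, hRa2, hRb1, hRb2⟩ := hR
    -- any vertex of e' is Near p
    have hmemNear : ∀ x : ℤ × ℤ, (x = p ∨ x = q ∨ x = r) → NearV x p := by
      intro x hx
      rcases hx with h | h | h <;> rw [h]
      · exact nearV_refl p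
      · exact nearV_of_adj hpq.symm
      · exact nearV_of_adj hpr.symm
    have hv0r : v0 ≠ r := by
      intro h
      have hnp : NearV v0 p := by rw [h]; exact hmemNear r (Or.inr (Or.inr rfl))
      rcases hv0e1 with h2 | h2
      · exact hRa1 (by rw [← h2]; exact hnp)
      · exact hRb1 (by rw [← h2]; exact hnp)
    have hadj : T8.Adj v0 r := T8_adj_of_nearV hb0 hv0r
    have hd2 : EdgeDist2 s(α, β) e' := by
      refine ⟨?_, ?_, s(v0, r), T8.mem_edgeSet.mpr hadj, ?_, ?_⟩
      · intro h
        have hα : α ∈ e' := by rw [← h, Sym2.mem_iff]; left; rfl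
        exact hRa1 (hmemNear α (he'mem α hα))
      · rintro ⟨x, hx1, hx2⟩
        have hx := hmemNear x (he'mem x hx2)
        rw [Sym2.mem_iff] at hx1
        rcases hx1 with rfl | rfl
        · exact hRa1 hx
        · exact hRb1 hx
      · exact ⟨v0, by rw [Sym2.mem_iff]; exact hv0e1, by rw [Sym2.mem_iff]; left; rfl⟩
      · exact ⟨r, by rw [Sym2.mem_iff]; right; rfl, hre'⟩
    have := hf.2 _ he1E _ he'E hd2
    rw [hfe'] at this
    have hcast : ((c - 1 : ℕ) : ℤ) = (c : ℤ) - 1 := by omega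
    rw [hcast] at this
    intro hcon
    rw [hcon] at this
    rw [show (c : ℤ) - ((c : ℤ) - 1) = 1 by ring] at this
    norm_num at this

/-- `s` is the corner of a unit square contained in the Chebyshev ball of radius 1
around `r`, avoiding the vertices `p` and `q`. -/
def GoodSq (s r p q : ℤ × ℤ) : Prop :=
  r.1 - 1 ≤ s.1 ∧ s.1 ≤ r.1 ∧ r.2 - 1 ≤ s.2 ∧ s.2 ≤ r.2 ∧
  (p.1 < s.1 ∨ s.1 + 1 < p.1 ∨ p.2 < s.2 ∨ s.2 + 1 < p.2) ∧
  (q.1 < s.1 ∨ s.1 + 1 < q.1 ∨ q.2 < s.2 ∨ s.2 + 1 < q.2)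

lemma goodSq_spec {s r p q : ℤ × ℤ} (h : GoodSq s r p q) :
    ∀ v ∈ unitSquare s.1 s.2, NearV v r ∧ v ≠ p ∧ v ≠ q := by
  obtain ⟨h1, h2, h3, h4, h5, h6⟩ := h
  intro v hv
  simp only [unitSquare, Set.mem_insert_iff, Set.mem_singleton_iff] at hv
  have hv1 : (v.1 = s.1 ∨ v.1 = s.1 + 1) ∧ (v.2 = s.2 ∨ v.2 = s.2 + 1) := by
    rcases hv with rfl | rfl | rfl | rfl <;> simp
  obtain ⟨hva, hvb⟩ := hv1
  refine ⟨?_, ?_, ?_⟩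
  · unfold NearV; omega
  · rw [Ne, Prod.ext_iff]; omega
  · rw [Ne, Prod.ext_iff]; omega

lemma two_squares_of (f : Sym2 (ℤ × ℤ) → ℕ) (hf : IsL12 f) (a b : ℤ) (c : ℕ) (hc : 1 ≤ c)
    (p q r : ℤ × ℤ) (e e' : Sym2 (ℤ × ℤ))
    (heeq : e = s(p, q))
    (hpq : T8.Adj p q) (hpr : T8.Adj p r) (hqr : T8.Adj q r)
    (he'mem : ∀ z ∈ e', z = p ∨ z = q ∨ z = r) (hre' : r ∈ e') (he'E : e' ∈ T8.edgeSet)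
    (hfe : f e = c) (hfe' : f e' = c - 1)
    (hns : p.1 = q.1 ∨ p.2 = q.2)
    (hin : p ∈ unitSquare a b ∨ q ∈ unitSquare a b) :
    ∃ p1 p2 : ℤ × ℤ, p1 ≠ p2 ∧
      unitSquare p1.1 p1.2 ⊆ Sprime a b ∧ unitSquare p2.1 p2.2 ⊆ Sprime a b ∧
      (∀ e1 ∈ GS (unitSquare p1.1 p1.2), f e1 ≠ c) ∧
      (∀ e1 ∈ GS (unitSquare p2.1 p2.2), f e1 ≠ c) := by
  obtain ⟨hA, hB, hC, hD, hE⟩ := T8_adj_coords hpq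
  obtain ⟨hF, hG, hH, hI, hJ⟩ := T8_adj_coords hpr
  obtain ⟨hK, hL, hM, hN, hO⟩ := T8_adj_coords hqr
  have key : ∀ s : ℤ × ℤ, GoodSq s r p q →
      unitSquare s.1 s.2 ⊆ Sprime a b ∧ ∀ e1 ∈ GS (unitSquare s.1 s.2), f e1 ≠ c := by
    intro s hs
    have hspec := goodSq_spec hs
    constructor
    · intro z hz
      obtain ⟨hnz, -, -⟩ := hspec z hz
      unfold NearV at hnz
      rcases hin with hin' | hin'
      · refine ⟨p, hin', ?_⟩
        rw [max_le_iff, abs_le, abs_le]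
        omega
      · refine ⟨q, hin', ?_⟩
        rw [max_le_iff, abs_le, abs_le]
        omega
    · exact helper_no_c f hf c hc p q r e e' heeq hpq hpr hqr he'mem hre' he'E hfe hfe' s hspec
  have hpick : ∃ s1 s2 : ℤ × ℤ, s1 ≠ s2 ∧ GoodSq s1 r p q ∧ GoodSq s2 r p q := by
    unfold GoodSq
    rcases hns with h | h
    · -- vertical edge: p.1 = q.1
      have hr1 : r.1 = p.1 + 1 ∨ r.1 = p.1 - 1 := by omega
      rcases hr1 with hr | hr
      · refine ⟨(r.1, r.2 - 1), (r.1, r.2), ?_, ?_, ?_⟩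
        · rw [Ne, Prod.ext_iff]; dsimp only; omega
        · omega
        · omega
      · refine ⟨(r.1 - 1, r.2 - 1), (r.1 - 1, r.2), ?_, ?_, ?_⟩
        · rw [Ne, Prod.ext_iff]; dsimp only; omega
        · omega
        · omega
    · -- horizontal edge: p.2 = q.2
      have hr2 : r.2 = p.2 + 1 ∨ r.2 = p.2 - 1 := by omega
      rcases hr2 with hr | hr
      · refine ⟨(r.1 - 1, r.2), (r.1, r.2), ?_, ?_, ?_⟩
        · rw [Ne, Prod.ext_iff]; dsimp only; omega
        · omega
        · omega
      · refine ⟨(r.1 - 1, r.2 - 1), (r.1, r.2 - 1), ?_, ?_, ?_⟩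
        · rw [Ne, Prod.ext_iff]; dsimp only; omega
        · omega
        · omega
  obtain ⟨s1, s2, hne, hg1, hg2⟩ := hpick
  exact ⟨s1, s2, hne, (key s1 hg1).1, (key s2 hg2).1, (key s1 hg1).2, (key s2 hg2).2⟩


/-- If three consecutive labels `c-1, c, c+1` are used on the three
edges of a triangle in `G_S` with `c` on the non-slanting edge, then there are two
distinct unit squares with all vertices in `S'` on which `c` is not used. -/
theorem triangle_nonslanting_two_squares (f : Sym2 (ℤ × ℤ) → ℕ) (hf : IsL12 f)
    (a b : ℤ) (c : ℕ) (hc : 1 ≤ c) (e e' e'' : Sym2 (ℤ × ℤ))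
    (he : e ∈ GS (unitSquare a b)) (he' : e' ∈ GS (unitSquare a b))
    (he'' : e'' ∈ GS (unitSquare a b))
    (htri : TriangleEdgeSet e e' e'') (hsl : ¬ Slanting e)
    (hfe : f e = c) (hfe' : f e' = c - 1) (hfe'' : f e'' = c + 1) :
    ∃ p1 p2 : ℤ × ℤ, p1 ≠ p2 ∧
      unitSquare p1.1 p1.2 ⊆ Sprime a b ∧ unitSquare p2.1 p2.2 ⊆ Sprime a b ∧
      (∀ e1 ∈ GS (unitSquare p1.1 p1.2), f e1 ≠ c) ∧
      (∀ e1 ∈ GS (unitSquare p2.1 p2.2), f e1 ≠ c) := by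
  obtain ⟨u, v, w, huv, hvw, huw, hset⟩ := htri
  have heM : e = s(u, v) ∨ e = s(v, w) ∨ e = s(u, w) := by
    have h : e ∈ ({s(u, v), s(v, w), s(u, w)} : Set (Sym2 (ℤ × ℤ))) := by
      rw [← hset]; exact Set.mem_insert _ _
    simpa using h
  have he'M : e' = s(u, v) ∨ e' = s(v, w) ∨ e' = s(u, w) := by
    have h : e' ∈ ({s(u, v), s(v, w), s(u, w)} : Set (Sym2 (ℤ × ℤ))) := by
      rw [← hset]; exact Set.mem_insert_of_mem _ (Set.mem_insert _ _)
    simpa using h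
  have hee' : e ≠ e' := by
    intro h
    rw [h, hfe'] at hfe
    omega
  have he'E : e' ∈ T8.edgeSet := he'.1
  have main : ∀ p q r : ℤ × ℤ, e = s(p, q) → T8.Adj p q → T8.Adj p r → T8.Adj q r →
      (∀ z ∈ e', z = p ∨ z = q ∨ z = r) → r ∈ e' →
      ∃ p1 p2 : ℤ × ℤ, p1 ≠ p2 ∧
        unitSquare p1.1 p1.2 ⊆ Sprime a b ∧ unitSquare p2.1 p2.2 ⊆ Sprime a b ∧
        (∀ e1 ∈ GS (unitSquare p1.1 p1.2), f e1 ≠ c) ∧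
        (∀ e1 ∈ GS (unitSquare p2.1 p2.2), f e1 ≠ c) := by
    intro p q r heeq hpq hpr hqr hmem hre'
    have hns : p.1 = q.1 ∨ p.2 = q.2 := by
      by_contra hcon
      push_neg at hcon
      exact hsl ⟨p, q, heeq, hcon.1, hcon.2⟩
    have hin : p ∈ unitSquare a b ∨ q ∈ unitSquare a b := by
      obtain ⟨-, v1, hv1, hv1e⟩ := he
      rw [heeq, Sym2.mem_iff] at hv1e
      rcases hv1e with h | h
      · left; rwa [← h]
      · right; rwa [← h]
    exact two_squares_of f hf a b c hc p q r e e' heeq hpq hpr hqr hmem hre' he'E hfe hfe' hns hin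
  rcases heM with hcase | hcase | hcase
  · refine main u v w hcase huv huw hvw ?_ ?_
    · intro z hz
      rcases he'M with h | h | h
      · exact absurd (hcase.trans h.symm) hee'
      · rw [h, Sym2.mem_iff] at hz; tauto
      · rw [h, Sym2.mem_iff] at hz; tauto
    · rcases he'M with h | h | h
      · exact absurd (hcase.trans h.symm) hee'
      · rw [h, Sym2.mem_iff]; tauto
      · rw [h, Sym2.mem_iff]; tauto
  · refine main v w u hcase hvw huv.symm huw.symm ?_ ?_
    · intro z hz
      rcases he'M with h | h | h
      · rw [h, Sym2.mem_iff] at hz; tauto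
      · exact absurd (hcase.trans h.symm) hee'
      · rw [h, Sym2.mem_iff] at hz; tauto
    · rcases he'M with h | h | h
      · rw [h, Sym2.mem_iff]; tauto
      · exact absurd (hcase.trans h.symm) hee'
      · rw [h, Sym2.mem_iff]; tauto
  · refine main u w v hcase huw huv hvw.symm ?_ ?_
    · intro z hz
      rcases he'M with h | h | h
      · rw [h, Sym2.mem_iff] at hz; tauto
      · rw [h, Sym2.mem_iff] at hz; tauto
      · exact absurd (hcase.trans h.symm) hee'
    · rcases he'M with h | h | h
      · rw [h, Sym2.mem_iff]; tauto
      · rw [h, Sym2.mem_iff]; tauto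
      · exact absurd (hcase.trans h.symm) hee'
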